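/- Let A be an n×n real matrix, B an n×m real matrix, C a p×n real matrix, Q a p×p real matrix, R an m×m real matrix, s ∈ ℝⁿ and r ∈ ℝᵐ. Define the stage cost φ(x,u) = |xᵀCᵀQCx + uᵀRu + sᵀx + rᵀu| and the value function V : ℝⁿ → [0,∞] by V(x) = inf over all input sequences u : ℕ → ℝᵐ of ∑_{k=0}^∞ φ(x_k, u_k), where x_0 = x and x_{k+1} = A x_k + B u_k. Suppose there exist an m×n real matrix K, a constant M > 0, and ρ ∈ (0,1) such that ‖(A + B K)^k x‖ ≤ M ρ^k ‖x‖ for all k ∈ ℕ and all x ∈ ℝⁿ. Then there exist constants c₁, c₂ ≥ 0 such that V(x) ≤ c₁ ‖x‖² + c₂ ‖x‖ for every x ∈ ℝⁿ. -/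

import Mathlib

open scoped ENNReal Matrix

/-- The trajectory of the discrete-time linear system `x_{k+1} = A x_k + B u_k`
starting from `x0` under the input sequence `u`. -/
def traj {n m : ℕ} (A : Matrix (Fin n) (Fin n) ℝ) (B : Matrix (Fin n) (Fin m) ℝ)
    (x0 : Fin n → ℝ) (u : ℕ → Fin m → ℝ) : ℕ → Fin n → ℝ
  | 0 => x0
  | k + 1 => A.mulVec (traj A B x0 u k) + B.mulVec (u k)

/-- The Euclidean norm of a vector in `Fin n → ℝ`. -/
noncomputable def eucNorm {n : ℕ} (x : Fin n → ℝ) : ℝ :=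
  ‖(EuclideanSpace.equiv (Fin n) ℝ).symm x‖

lemma enorm_eq {n : ℕ} (x : Fin n → ℝ) : eucNorm x = Real.sqrt (∑ i, x i ^ 2) := by
  simp [eucNorm, EuclideanSpace.norm_eq]

lemma enorm_nonneg' {n : ℕ} (x : Fin n → ℝ) : 0 ≤ eucNorm x := by
  rw [enorm_eq]; positivity

lemma abs_apply_le_enorm {n : ℕ} (x : Fin n → ℝ) (i : Fin n) : |x i| ≤ eucNorm x := by
  rw [enorm_eq, ← Real.sqrt_sq_eq_abs]
  exact Real.sqrt_le_sqrt (Finset.single_le_sum (fun j _ => sq_nonneg (x j)) (Finset.mem_univ i))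

lemma enorm_le_sum_abs {n : ℕ} (x : Fin n → ℝ) : eucNorm x ≤ ∑ i, |x i| := by
  rw [enorm_eq]
  have h : ∑ i, x i ^ 2 ≤ (∑ i, |x i|) ^ 2 := by
    rw [sq, Finset.sum_mul]
    refine Finset.sum_le_sum fun i _ => ?_
    calc x i ^ 2 = |x i| * |x i| := by rw [sq, ← abs_mul_abs_self]
    _ ≤ |x i| * ∑ j, |x j| := by
        exact mul_le_mul_of_nonneg_left
          (Finset.single_le_sum (fun j _ => abs_nonneg (x j)) (Finset.mem_univ i)) (abs_nonneg _)
  calc Real.sqrt (∑ i, x i ^ 2) ≤ Real.sqrt ((∑ i, |x i|) ^ 2) := Real.sqrt_le_sqrt h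
  _ = ∑ i, |x i| := Real.sqrt_sq (Finset.sum_nonneg fun i _ => abs_nonneg _)

lemma dot_abs_le {q : ℕ} (s x : Fin q → ℝ) : |s ⬝ᵥ x| ≤ (∑ i, |s i|) * eucNorm x := by
  rw [dotProduct, Finset.sum_mul]
  refine (Finset.abs_sum_le_sum_abs _ _).trans (Finset.sum_le_sum fun i _ => ?_)
  rw [abs_mul]
  exact mul_le_mul_of_nonneg_left (abs_apply_le_enorm x i) (abs_nonneg _)

lemma dot_mulVec_abs_le {a b : ℕ} (P : Matrix (Fin a) (Fin b) ℝ) (x : Fin a → ℝ) (y : Fin b → ℝ) :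
    |x ⬝ᵥ P.mulVec y| ≤ (∑ i, ∑ j, |P i j|) * eucNorm x * eucNorm y := by
  rw [dotProduct]
  calc |∑ i, x i * P.mulVec y i| ≤ ∑ i, |x i * P.mulVec y i| := Finset.abs_sum_le_sum_abs _ _
  _ ≤ ∑ i, (∑ j, |P i j|) * eucNorm x * eucNorm y := by
      refine Finset.sum_le_sum fun i _ => ?_
      rw [abs_mul, Matrix.mulVec, dotProduct]
      calc |x i| * |∑ j, P i j * y j| ≤ eucNorm x * ∑ j, |P i j| * eucNorm y := by
            refine mul_le_mul (abs_apply_le_enorm x i)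
              ((Finset.abs_sum_le_sum_abs _ _).trans (Finset.sum_le_sum fun j _ => ?_))
              (abs_nonneg _) (enorm_nonneg' x)
            rw [abs_mul]
            exact mul_le_mul_of_nonneg_left (abs_apply_le_enorm y j) (abs_nonneg _)
      _ = (∑ j, |P i j|) * eucNorm x * eucNorm y := by rw [← Finset.sum_mul]; ring
  _ = (∑ i, ∑ j, |P i j|) * eucNorm x * eucNorm y := by rw [Finset.sum_mul, Finset.sum_mul]

lemma enorm_mulVec_le {a b : ℕ} (P : Matrix (Fin a) (Fin b) ℝ) (x : Fin b → ℝ) :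
    eucNorm (P.mulVec x) ≤ (∑ i, ∑ j, |P i j|) * eucNorm x := by
  calc eucNorm (P.mulVec x) ≤ ∑ i, |P.mulVec x i| := enorm_le_sum_abs _
  _ ≤ ∑ i, (∑ j, |P i j|) * eucNorm x := by
      refine Finset.sum_le_sum fun i _ => ?_
      rw [Matrix.mulVec, dotProduct, Finset.sum_mul]
      refine (Finset.abs_sum_le_sum_abs _ _).trans (Finset.sum_le_sum fun j _ => ?_)
      rw [abs_mul]
      exact mul_le_mul_of_nonneg_left (abs_apply_le_enorm x j) (abs_nonneg _)
  _ = (∑ i, ∑ j, |P i j|) * eucNorm x := by rw [Finset.sum_mul]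

lemma traj_feedback {n m : ℕ} (A : Matrix (Fin n) (Fin n) ℝ) (B : Matrix (Fin n) (Fin m) ℝ)
    (K : Matrix (Fin m) (Fin n) ℝ) (x : Fin n → ℝ) (k : ℕ) :
    traj A B x (fun j => K.mulVec (((A + B * K) ^ j).mulVec x)) k
      = ((A + B * K) ^ k).mulVec x := by
  induction k with
  | zero => simp [traj]
  | succ k ih =>
      show A.mulVec _ + B.mulVec _ = _
      rw [ih, pow_succ']
      show A.mulVec _ + B.mulVec (K.mulVec _) = _
      simp [Matrix.add_mul, Matrix.add_mulVec, Matrix.mulVec_mulVec, Matrix.mul_assoc]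

theorem value_function_quadratic_bound {n m p : ℕ}
    (A : Matrix (Fin n) (Fin n) ℝ) (B : Matrix (Fin n) (Fin m) ℝ)
    (C : Matrix (Fin p) (Fin n) ℝ) (Q : Matrix (Fin p) (Fin p) ℝ)
    (R : Matrix (Fin m) (Fin m) ℝ) (s : Fin n → ℝ) (r : Fin m → ℝ)
    (φ : (Fin n → ℝ) → (Fin m → ℝ) → ℝ)
    (hφ : ∀ (x : Fin n → ℝ) (u : Fin m → ℝ),
      φ x u = |x ⬝ᵥ (Cᵀ * Q * C).mulVec x + u ⬝ᵥ R.mulVec u + s ⬝ᵥ x + r ⬝ᵥ u|)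
    (V : (Fin n → ℝ) → ℝ≥0∞)
    (hV : ∀ x : Fin n → ℝ,
      V x = ⨅ u : ℕ → Fin m → ℝ, ∑' k : ℕ, ENNReal.ofReal (φ (traj A B x u k) (u k)))
    (K : Matrix (Fin m) (Fin n) ℝ) (M : ℝ) (hM : 0 < M) (ρ : ℝ) (hρ0 : 0 < ρ) (hρ1 : ρ < 1)
    (hstab : ∀ (k : ℕ) (x : Fin n → ℝ),
      eucNorm (((A + B * K) ^ k).mulVec x) ≤ M * ρ ^ k * eucNorm x) :
    ∃ c₁ c₂ : ℝ, 0 ≤ c₁ ∧ 0 ≤ c₂ ∧ ∀ x : Fin n → ℝ,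
      V x ≤ ENNReal.ofReal (c₁ * eucNorm x ^ 2 + c₂ * eucNorm x) := by
  obtain ⟨cC, hcC⟩ : ∃ c : ℝ, c = ∑ i, ∑ j, |(Cᵀ * Q * C) i j| := ⟨_, rfl⟩
  obtain ⟨cR, hcR⟩ : ∃ c : ℝ, c = ∑ i, ∑ j, |R i j| := ⟨_, rfl⟩
  obtain ⟨cK, hcK⟩ : ∃ c : ℝ, c = ∑ i, ∑ j, |K i j| := ⟨_, rfl⟩
  obtain ⟨cs, hcs⟩ : ∃ c : ℝ, c = ∑ i, |s i| := ⟨_, rfl⟩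
  obtain ⟨cr, hcr⟩ : ∃ c : ℝ, c = ∑ i, |r i| := ⟨_, rfl⟩
  have hcC0 : 0 ≤ cC := hcC ▸ Finset.sum_nonneg fun i _ => Finset.sum_nonneg fun j _ => abs_nonneg _
  have hcR0 : 0 ≤ cR := hcR ▸ Finset.sum_nonneg fun i _ => Finset.sum_nonneg fun j _ => abs_nonneg _
  have hcK0 : 0 ≤ cK := hcK ▸ Finset.sum_nonneg fun i _ => Finset.sum_nonneg fun j _ => abs_nonneg _
  have hcs0 : 0 ≤ cs := hcs ▸ Finset.sum_nonneg fun i _ => abs_nonneg _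
  have hcr0 : 0 ≤ cr := hcr ▸ Finset.sum_nonneg fun i _ => abs_nonneg _
  set α : ℝ := cC + cR * cK ^ 2 with hα
  set β : ℝ := cs + cr * cK with hβ
  have hα0 : 0 ≤ α := add_nonneg hcC0 (mul_nonneg hcR0 (sq_nonneg _))
  have hβ0 : 0 ≤ β := add_nonneg hcs0 (mul_nonneg hcr0 hcK0)
  have hρ2 : ρ ^ 2 < 1 := by nlinarith
  have h1ρ2 : 0 < 1 - ρ ^ 2 := by linarith
  have h1ρ : 0 < 1 - ρ := by linarith
  refine ⟨α * M ^ 2 / (1 - ρ ^ 2), β * M / (1 - ρ),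
    div_nonneg (mul_nonneg hα0 (sq_nonneg M)) h1ρ2.le,
    div_nonneg (mul_nonneg hβ0 hM.le) h1ρ.le, fun x => ?_⟩
  rw [hV]
  have hex0 : 0 ≤ eucNorm x := enorm_nonneg' x
  have haq : 0 ≤ α * M ^ 2 * eucNorm x ^ 2 := mul_nonneg (mul_nonneg hα0 (sq_nonneg M)) (sq_nonneg _)
  have hbq : 0 ≤ β * M * eucNorm x := mul_nonneg (mul_nonneg hβ0 hM.le) hex0
  refine le_trans (iInf_le _ (fun j => K.mulVec (((A + B * K) ^ j).mulVec x))) ?_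
  have key : ∀ k : ℕ,
      ENNReal.ofReal (φ (traj A B x (fun j => K.mulVec (((A + B * K) ^ j).mulVec x)) k)
          (K.mulVec (((A + B * K) ^ k).mulVec x)))
        ≤ ENNReal.ofReal (α * M ^ 2 * eucNorm x ^ 2 * (ρ ^ 2) ^ k)
          + ENNReal.ofReal (β * M * eucNorm x * ρ ^ k) := by
    intro k
    rw [traj_feedback, ← ENNReal.ofReal_add
      (mul_nonneg haq (pow_nonneg (sq_nonneg ρ) k)) (mul_nonneg hbq (pow_nonneg hρ0.le k))]
    apply ENNReal.ofReal_le_ofReal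
    set y : Fin n → ℝ := ((A + B * K) ^ k).mulVec x with hy
    have hey : eucNorm y ≤ M * ρ ^ k * eucNorm x := hstab k x
    have hey0 : 0 ≤ eucNorm y := enorm_nonneg' y
    have ht0 : 0 ≤ M * ρ ^ k * eucNorm x := by positivity
    have hKy : eucNorm (K.mulVec y) ≤ cK * eucNorm y := hcK ▸ enorm_mulVec_le K y
    have hKy0 : 0 ≤ eucNorm (K.mulVec y) := enorm_nonneg' _
    have h1 : |y ⬝ᵥ (Cᵀ * Q * C).mulVec y| ≤ cC * eucNorm y ^ 2 := by
      have h := hcC ▸ dot_mulVec_abs_le (Cᵀ * Q * C) y y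
      calc |y ⬝ᵥ (Cᵀ * Q * C).mulVec y| ≤ cC * eucNorm y * eucNorm y := h
      _ = cC * eucNorm y ^ 2 := by ring
    have h2 : |K.mulVec y ⬝ᵥ R.mulVec (K.mulVec y)| ≤ cR * (cK * eucNorm y) ^ 2 := by
      have h := hcR ▸ dot_mulVec_abs_le R (K.mulVec y) (K.mulVec y)
      have h' : eucNorm (K.mulVec y) * eucNorm (K.mulVec y) ≤ (cK * eucNorm y) * (cK * eucNorm y) :=
        mul_le_mul hKy hKy hKy0 (mul_nonneg hcK0 hey0)
      calc |K.mulVec y ⬝ᵥ R.mulVec (K.mulVec y)| ≤ cR * eucNorm (K.mulVec y) * eucNorm (K.mulVec y) := h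
      _ = cR * (eucNorm (K.mulVec y) * eucNorm (K.mulVec y)) := by ring
      _ ≤ cR * ((cK * eucNorm y) * (cK * eucNorm y)) := mul_le_mul_of_nonneg_left h' hcR0
      _ = cR * (cK * eucNorm y) ^ 2 := by ring
    have h3 : |s ⬝ᵥ y| ≤ cs * eucNorm y := hcs ▸ dot_abs_le s y
    have h4 : |r ⬝ᵥ K.mulVec y| ≤ cr * (cK * eucNorm y) := by
      calc |r ⬝ᵥ K.mulVec y| ≤ cr * eucNorm (K.mulVec y) := hcr ▸ dot_abs_le r (K.mulVec y)
      _ ≤ cr * (cK * eucNorm y) := mul_le_mul_of_nonneg_left hKy hcr0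
    have hstep : φ y (K.mulVec y) ≤ α * eucNorm y ^ 2 + β * eucNorm y := by
      rw [hφ]
      calc |y ⬝ᵥ (Cᵀ * Q * C).mulVec y + K.mulVec y ⬝ᵥ R.mulVec (K.mulVec y) + s ⬝ᵥ y
              + r ⬝ᵥ K.mulVec y|
          ≤ |y ⬝ᵥ (Cᵀ * Q * C).mulVec y| + |K.mulVec y ⬝ᵥ R.mulVec (K.mulVec y)| + |s ⬝ᵥ y|
              + |r ⬝ᵥ K.mulVec y| :=
            (abs_add_le _ _).trans (add_le_add ((abs_add_le _ _).trans
              (add_le_add (abs_add_le _ _) le_rfl)) le_rfl)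
      _ ≤ cC * eucNorm y ^ 2 + cR * (cK * eucNorm y) ^ 2 + cs * eucNorm y + cr * (cK * eucNorm y) :=
            add_le_add (add_le_add (add_le_add h1 h2) h3) h4
      _ = α * eucNorm y ^ 2 + β * eucNorm y := by rw [hα, hβ]; ring
    refine hstep.trans ?_
    have hsq : eucNorm y ^ 2 ≤ (M * ρ ^ k * eucNorm x) ^ 2 := by
      rw [sq, sq]; exact mul_le_mul hey hey hey0 ht0
    calc α * eucNorm y ^ 2 + β * eucNorm y
        ≤ α * (M * ρ ^ k * eucNorm x) ^ 2 + β * (M * ρ ^ k * eucNorm x) :=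
          add_le_add (mul_le_mul_of_nonneg_left hsq hα0) (mul_le_mul_of_nonneg_left hey hβ0)
    _ = α * M ^ 2 * eucNorm x ^ 2 * (ρ ^ 2) ^ k + β * M * eucNorm x * ρ ^ k := by
          ring
  refine le_trans (ENNReal.tsum_le_tsum key) ?_
  rw [ENNReal.tsum_add]
  have hsum1 : Summable (fun k : ℕ => α * M ^ 2 * eucNorm x ^ 2 * (ρ ^ 2) ^ k) :=
    (summable_geometric_of_lt_one (sq_nonneg ρ) hρ2).mul_left _
  have hsum2 : Summable (fun k : ℕ => β * M * eucNorm x * ρ ^ k) :=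
    (summable_geometric_of_lt_one hρ0.le hρ1).mul_left _
  rw [← ENNReal.ofReal_tsum_of_nonneg
      (fun k => mul_nonneg haq (pow_nonneg (sq_nonneg ρ) k)) hsum1,
    ← ENNReal.ofReal_tsum_of_nonneg
      (fun k => mul_nonneg hbq (pow_nonneg hρ0.le k)) hsum2,
    tsum_mul_left, tsum_mul_left, tsum_geometric_of_lt_one (sq_nonneg ρ) hρ2,
    tsum_geometric_of_lt_one hρ0.le hρ1,
    ← ENNReal.ofReal_add (mul_nonneg haq (inv_nonneg.mpr h1ρ2.le))
      (mul_nonneg hbq (inv_nonneg.mpr h1ρ.le))]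
  apply ENNReal.ofReal_le_ofReal
  apply le_of_eq
  field_simp
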